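/- Let V : [0,L] → ℝ be twice continuously differentiable and satisfy λ²·V''(s) = V(s) + b·g(V(s)) for all s ∈ [0,L], with V(0) > 0 and V(L) < 0. Then there exists a unique s₁ ∈ (0,L) such that V(s₁) = 0; moreover V(s) > 0 for all s ∈ [0,s₁) and V(s) < 0 for all s ∈ (s₁,L]. -/

import Mathlib

open Set Filter

lemma max_sq_hasDerivAt (x : ℝ) :
    HasDerivAt (fun y : ℝ => max y 0 ^ 2) (2 * max x 0) x := by
  have hfun : (fun y : ℝ => max y 0 ^ 2) = fun y : ℝ => y * max y 0 := by
    funext y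
    rcases le_or_gt 0 y with hy | hy
    · rw [max_eq_left hy]; ring
    · rw [max_eq_right hy.le]; ring
  rcases lt_trichotomy x 0 with hx | rfl | hx
  · have hev : (fun y : ℝ => max y 0 ^ 2) =ᶠ[nhds x] fun _ => (0 : ℝ) := by
      filter_upwards [Iio_mem_nhds hx] with y hy
      rw [max_eq_right (le_of_lt hy)]; ring
    have := (hasDerivAt_const x (0 : ℝ)).congr_of_eventuallyEq hev
    simpa [max_eq_right hx.le] using this
  · rw [hasDerivAt_iff_tendsto_slope]
    have h1 : Tendsto (fun y : ℝ => max y 0) (nhdsWithin 0 {(0:ℝ)}ᶜ) (nhds 0) := by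
      have : Continuous fun y : ℝ => max y 0 := continuous_id.max continuous_const
      simpa using (this.tendsto 0).mono_left nhdsWithin_le_nhds
    have h2 : (fun y : ℝ => max y 0) =ᶠ[nhdsWithin 0 {(0:ℝ)}ᶜ]
        slope (fun y : ℝ => max y 0 ^ 2) 0 := by
      filter_upwards [self_mem_nhdsWithin] with y hy
      have hy' : y ≠ 0 := hy
      rw [hfun, slope_def_field]
      field_simp
      ring
    simpa using h1.congr' h2
  · have hev : (fun y : ℝ => max y 0 ^ 2) =ᶠ[nhds x] fun y => y ^ 2 := by
      filter_upwards [Ioi_mem_nhds hx] with y hy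
      rw [max_eq_left (le_of_lt hy)]
    have := ((hasDerivAt_pow 2 x)).congr_of_eventuallyEq hev
    simpa [max_eq_left hx.le] using this

lemma mono_of_deriv_nonneg' {a b : ℝ} {f f' : ℝ → ℝ}
    (hf : ∀ s ∈ Icc a b, HasDerivWithinAt f (f' s) (Icc a b) s)
    (h0 : ∀ s ∈ Icc a b, 0 ≤ f' s) : MonotoneOn f (Icc a b) := by
  have key : ∀ x ∈ interior (Icc a b), HasDerivAt f (f' x) x := by
    intro x hx
    rw [interior_Icc] at hx
    exact (hf x (Ioo_subset_Icc_self hx)).hasDerivAt (Icc_mem_nhds hx.1 hx.2)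
  refine monotoneOn_of_deriv_nonneg (convex_Icc a b)
    (fun s hs => (hf s hs).continuousWithinAt)
    (fun x hx => (key x hx).differentiableAt.differentiableWithinAt) ?_
  intro x hx
  rw [(key x hx).deriv]
  rw [interior_Icc] at hx
  exact h0 x (Ioo_subset_Icc_self hx)

lemma const_of_deriv_zero' {a b : ℝ} {f : ℝ → ℝ}
    (hf : ∀ s ∈ Icc a b, HasDerivWithinAt f 0 (Icc a b) s) :
    ∀ s ∈ Icc a b, f s = f a := by
  intro s hs
  have ha : a ∈ Icc a b := ⟨le_refl a, hs.1.trans hs.2⟩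
  have h1 : f a ≤ f s :=
    mono_of_deriv_nonneg' (f' := fun _ => 0) hf (fun _ _ => le_refl 0) ha hs hs.1
  have h2 : f s ≤ f a := by
    have : MonotoneOn (fun t => -f t) (Icc a b) :=
      mono_of_deriv_nonneg' (f' := fun _ => 0)
        (fun t ht => (hf t ht).neg.congr_deriv (by ring)) (fun _ _ => le_refl 0)
    have := this ha hs hs.1
    simpa using this
  linarith


set_option maxHeartbeats 1000000

/-- Single zero crossing of the cable equilibrium equation
`λ² V''(s) = V(s) + b·max(V(s), 0)` when the boundary values have opposite signs:
if `V(0) > 0` and `V(L) < 0`, there is a unique `s₁ ∈ (0, L)` with `V(s₁) = 0`;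
moreover `V > 0` on `[0, s₁)` and `V < 0` on `(s₁, L]`. -/
theorem cable_equilibrium_unique_zero_crossing
    (lam L b : ℝ) (hlam : 0 < lam) (hL : 0 < L) (hb : 0 ≤ b)
    (V V' V'' : ℝ → ℝ)
    (hV : ∀ s ∈ Icc 0 L, HasDerivWithinAt V (V' s) (Icc 0 L) s)
    (hV' : ∀ s ∈ Icc 0 L, HasDerivWithinAt V' (V'' s) (Icc 0 L) s)
    (hV''cont : ContinuousOn V'' (Icc 0 L))
    (hODE : ∀ s ∈ Icc 0 L, lam ^ 2 * V'' s = V s + b * max (V s) 0)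
    (h0 : 0 < V 0) (hLval : V L < 0) :
    ∃ s₁ ∈ Ioo 0 L, V s₁ = 0 ∧
      (∀ s ∈ Ico 0 s₁, 0 < V s) ∧
      (∀ s ∈ Ioc s₁ L, V s < 0) ∧
      (∀ s ∈ Ioo 0 L, V s = 0 → s = s₁) := by
  have h0mem : (0:ℝ) ∈ Icc 0 L := ⟨le_refl 0, hL.le⟩
  have hLmem : L ∈ Icc 0 L := ⟨hL.le, le_refl L⟩
  have contV : ContinuousOn V (Icc 0 L) := fun s hs => (hV s hs).continuousWithinAt
  -- the zero set
  set Z : Set ℝ := Icc 0 L ∩ V ⁻¹' {0} with hZdef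
  have hZclosed : IsClosed Z := contV.preimage_isClosed_of_isClosed isClosed_Icc isClosed_singleton
  have hZne : Z.Nonempty := by
    have h00 : (0:ℝ) ∈ Icc (V L) (V 0) := ⟨hLval.le, h0.le⟩
    obtain ⟨t, ht, hVt⟩ := intermediate_value_Icc' hL.le contV h00
    exact ⟨t, ht, by simpa using hVt⟩
  have hZbddb : BddBelow Z := ⟨0, fun x hx => hx.1.1⟩
  have hZbdda : BddAbove Z := ⟨L, fun x hx => hx.1.2⟩
  set s₁ : ℝ := sInf Z with hs₁def
  set s₂ : ℝ := sSup Z with hs₂def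
  have hs₁Z : s₁ ∈ Z := hZclosed.csInf_mem hZne hZbddb
  have hs₂Z : s₂ ∈ Z := hZclosed.csSup_mem hZne hZbdda
  have hVs₁ : V s₁ = 0 := hs₁Z.2
  have hVs₂ : V s₂ = 0 := hs₂Z.2
  have hs₁mem : s₁ ∈ Icc 0 L := hs₁Z.1
  have hs₂mem : s₂ ∈ Icc 0 L := hs₂Z.1
  have hs₁le₂ : s₁ ≤ s₂ := csInf_le_csSup hZne hZbddb hZbdda
  have hs₁pos : 0 < s₁ := lt_of_le_of_ne hs₁mem.1 (by
    intro h; rw [← h] at hVs₁; exact absurd hVs₁ (ne_of_gt h0))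
  have hs₂lt : s₂ < L := lt_of_le_of_ne hs₂mem.2 (by
    intro h; rw [h] at hVs₂; exact absurd hVs₂ (ne_of_lt hLval))
  -- positivity before s₁
  have hpos : ∀ s ∈ Ico 0 s₁, 0 < V s := by
    rintro s ⟨hs0, hss₁⟩
    by_contra hc
    push_neg at hc
    have hsL : s ∈ Icc 0 L := ⟨hs0, hss₁.le.trans hs₁mem.2⟩
    rcases eq_or_lt_of_le hc with heq | hlt
    · exact absurd (csInf_le hZbddb ⟨hsL, heq⟩) (not_le.2 hss₁)
    · have h00 : (0:ℝ) ∈ Icc (V s) (V 0) := ⟨hlt.le, h0.le⟩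
      have hsub : Icc (0:ℝ) s ⊆ Icc 0 L := Icc_subset_Icc le_rfl hsL.2
      obtain ⟨t, ht, hVt⟩ := intermediate_value_Icc' hs0 (contV.mono hsub) h00
      have : s₁ ≤ t := csInf_le hZbddb ⟨hsub ht, by simpa using hVt⟩
      have : s₁ ≤ s := this.trans ht.2
      exact absurd this (not_le.2 hss₁)
  -- negativity after s₂
  have hneg : ∀ s ∈ Ioc s₂ L, V s < 0 := by
    rintro s ⟨hss₂, hsL⟩
    by_contra hc
    push_neg at hc
    have hs0L : s ∈ Icc 0 L := ⟨hs₂mem.1.trans hss₂.le, hsL⟩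
    rcases eq_or_lt_of_le hc with heq | hlt
    · exact absurd (le_csSup hZbdda ⟨hs0L, heq.symm⟩) (not_le.2 hss₂)
    · have h00 : (0:ℝ) ∈ Icc (V L) (V s) := ⟨hLval.le, hlt.le⟩
      have hsub : Icc s L ⊆ Icc 0 L := Icc_subset_Icc hs0L.1 le_rfl
      obtain ⟨t, ht, hVt⟩ := intermediate_value_Icc' hsL (contV.mono hsub) h00
      have : t ≤ s₂ := le_csSup hZbdda ⟨hsub ht, by simpa using hVt⟩
      exact absurd (hss₂.trans_le (ht.1.trans this)) (lt_irrefl s₂)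
  -- energy function
  set E : ℝ → ℝ := fun s => lam ^ 2 * (V' s) ^ 2 - (V s) ^ 2 - b * (max (V s) 0) ^ 2 with hEdef
  have hE : ∀ s ∈ Icc 0 L, HasDerivWithinAt E 0 (Icc 0 L) s := by
    intro s hs
    have h1 : HasDerivWithinAt (fun t => (V' t) ^ 2) (2 * V' s * V'' s) (Icc 0 L) s := by
      have := (hV' s hs).fun_pow 2
      simpa [pow_one, mul_comm, mul_assoc, mul_left_comm] using this
    have h2 : HasDerivWithinAt (fun t => (V t) ^ 2) (2 * V s * V' s) (Icc 0 L) s := by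
      have := (hV s hs).fun_pow 2
      simpa [pow_one, mul_comm, mul_assoc, mul_left_comm] using this
    have h3 : HasDerivWithinAt (fun t => max (V t) 0 ^ 2) (2 * max (V s) 0 * V' s)
        (Icc 0 L) s := by
      have := (max_sq_hasDerivAt (V s)).comp_hasDerivWithinAt s (hV s hs)
      simpa [Function.comp_def, mul_comm, mul_assoc, mul_left_comm] using this
    have h4 : HasDerivWithinAt E
        (lam ^ 2 * (2 * V' s * V'' s) - 2 * V s * V' s - b * (2 * max (V s) 0 * V' s))
        (Icc 0 L) s := ((h1.const_mul (lam ^ 2)).sub h2).sub (h3.const_mul b)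
    have hz : lam ^ 2 * (2 * V' s * V'' s) - 2 * V s * V' s - b * (2 * max (V s) 0 * V' s)
        = 0 := by
      have := hODE s hs
      linear_combination (2 * V' s) * this
    rwa [hz] at h4
  have Econst : ∀ s ∈ Icc 0 L, E s = E 0 := const_of_deriv_zero' hE
  -- main claim : s₁ = s₂
  have hkey : s₁ = s₂ := by
    by_contra hne
    have h12 : s₁ < s₂ := lt_of_le_of_ne hs₁le₂ hne
    have hsubI : Icc s₁ s₂ ⊆ Icc 0 L := Icc_subset_Icc hs₁mem.1 hs₂mem.2
    have hEs₁ : E s₁ = lam ^ 2 * (V' s₁) ^ 2 := by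
      simp [hEdef, hVs₁]
    -- derivative as genuine derivative at interior points of (s₁, s₂)
    have hDA : ∀ m ∈ Ioo s₁ s₂, HasDerivAt V (V' m) m := by
      intro m hm
      have hmL : m ∈ Icc 0 L := hsubI (Ioo_subset_Icc_self hm)
      exact (hV m hmL).hasDerivAt
        (Icc_mem_nhds (hs₁pos.trans hm.1) (hm.2.trans_le hs₂mem.2))
    by_cases hcneg : ∃ c ∈ Icc s₁ s₂, V c < 0
    · obtain ⟨c, hc, hVc⟩ := hcneg
      obtain ⟨m, hm, hmin⟩ := isCompact_Icc.exists_isMinOn (nonempty_Icc.2 h12.le)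
        (contV.mono hsubI)
      have hVm : V m < 0 := (hmin hc).trans_lt hVc
      have hmI : m ∈ Ioo s₁ s₂ := by
        rcases eq_or_lt_of_le hm.1 with h | h
        · rw [← h] at hVm; rw [hVs₁] at hVm; exact absurd hVm (lt_irrefl 0)
        rcases eq_or_lt_of_le hm.2 with h2 | h2
        · rw [h2] at hVm; rw [hVs₂] at hVm; exact absurd hVm (lt_irrefl 0)
        exact ⟨h, h2⟩
      have hloc : IsLocalMin V m := hmin.isLocalMin (Icc_mem_nhds hmI.1 hmI.2)
      have hV'm : V' m = 0 := hloc.hasDerivAt_eq_zero (hDA m hmI)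
      have hEm : E m = -(V m) ^ 2 := by
        simp [hEdef, hV'm, max_eq_right hVm.le]
      have hEeq : E m = E s₁ := by
        rw [Econst m (hsubI (Ioo_subset_Icc_self hmI)), Econst s₁ hs₁mem]
      nlinarith [sq_nonneg (V' s₁), sq_nonneg lam, mul_pos (neg_pos.2 hVm) (neg_pos.2 hVm),
        mul_nonneg (sq_nonneg lam) (sq_nonneg (V' s₁))]
    by_cases hcpos : ∃ c ∈ Icc s₁ s₂, 0 < V c
    · obtain ⟨c, hc, hVc⟩ := hcpos
      obtain ⟨m, hm, hmax⟩ := isCompact_Icc.exists_isMaxOn (nonempty_Icc.2 h12.le)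
        (contV.mono hsubI)
      have hVm : 0 < V m := hVc.trans_le (hmax hc)
      have hmI : m ∈ Ioo s₁ s₂ := by
        rcases eq_or_lt_of_le hm.1 with h | h
        · rw [← h] at hVm; rw [hVs₁] at hVm; exact absurd hVm (lt_irrefl 0)
        rcases eq_or_lt_of_le hm.2 with h2 | h2
        · rw [h2] at hVm; rw [hVs₂] at hVm; exact absurd hVm (lt_irrefl 0)
        exact ⟨h, h2⟩
      have hloc : IsLocalMax V m := hmax.isLocalMax (Icc_mem_nhds hmI.1 hmI.2)
      have hV'm : V' m = 0 := hloc.hasDerivAt_eq_zero (hDA m hmI)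
      have hEm : E m = -(V m) ^ 2 - b * (V m) ^ 2 := by
        simp [hEdef, hV'm, max_eq_left hVm.le]
      have hEeq : E m = E s₁ := by
        rw [Econst m (hsubI (Ioo_subset_Icc_self hmI)), Econst s₁ hs₁mem]
      nlinarith [sq_nonneg (V' s₁), mul_pos hVm hVm,
        mul_nonneg (sq_nonneg lam) (sq_nonneg (V' s₁)),
        mul_nonneg hb (mul_pos hVm hVm).le]
    -- degenerate case : V ≡ 0 on [s₁, s₂]
    push_neg at hcneg hcpos
    have hVzero : ∀ c ∈ Icc s₁ s₂, V c = 0 := fun c hc =>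
      le_antisymm (hcpos c hc) (hcneg c hc)
    set z : ℝ := (s₁ + s₂) / 2 with hzdef
    have hzI : z ∈ Ioo s₁ s₂ := ⟨by linarith, by linarith⟩
    have hVz : V z = 0 := hVzero z (Ioo_subset_Icc_self hzI)
    have hV'z : V' z = 0 := by
      have hloc : IsLocalMin V z := by
        have : IsMinOn V (Icc s₁ s₂) z := by
          intro c hc
          simp only [mem_setOf_eq, hVzero c hc, hVz]
          exact le_refl _
        exact this.isLocalMin (Icc_mem_nhds hzI.1 hzI.2)
      exact hloc.hasDerivAt_eq_zero (hDA z hzI)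
    have hE0 : E 0 = 0 := by
      have := Econst z (hsubI (Ioo_subset_Icc_self hzI))
      rw [hEdef] at this ⊢
      simp only [hVz, hV'z] at this
      simp only [max_self] at this ⊢
      nlinarith [this]
    -- exponential argument on [0, s₁]
    set r : ℝ := Real.sqrt (1 + b) with hrdef
    have hr2 : r ^ 2 = 1 + b := Real.sq_sqrt (by linarith)
    have hrpos : 0 < r := Real.sqrt_pos.2 (by linarith)
    set c : ℝ := r / lam with hcdef
    have hVnn : ∀ s ∈ Icc 0 s₁, 0 ≤ V s := by
      rintro s ⟨hs0, hss₁⟩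
      rcases eq_or_lt_of_le hss₁ with h | h
      · rw [h, hVs₁]
      · exact (hpos s ⟨hs0, h⟩).le
    have hsub1 : Icc (0:ℝ) s₁ ⊆ Icc 0 L := Icc_subset_Icc le_rfl hs₁mem.2
    have hkey2 : ∀ s ∈ Icc 0 s₁, 0 ≤ c * V s + V' s := by
      intro s hs
      have hsL := hsub1 hs
      have hVs : 0 ≤ V s := hVnn s hs
      have hEs : lam ^ 2 * V' s ^ 2 - V s ^ 2 - b * V s ^ 2 = 0 := by
        have h := Econst s hsL
        rw [hE0] at h
        simpa [hEdef, max_eq_left hVs] using h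
      -- lam^2 V'^2 = (1+b) V^2 = r^2 V^2
      by_contra hcon
      push_neg at hcon
      have h1 : lam * (c * V s + V' s) < 0 :=
        mul_neg_of_pos_of_neg hlam hcon
      have heq : lam * (c * V s + V' s) = r * V s + lam * V' s := by
        rw [hcdef]
        field_simp
      rw [heq] at h1
      have hAB : (lam * V' s) ^ 2 = (r * V s) ^ 2 := by
        linear_combination hEs - V s ^ 2 * hr2
      have h3 : 0 ≤ r * V s := mul_nonneg hrpos.le hVs
      have hfact : (r * V s + lam * V' s) * (r * V s - lam * V' s) = 0 := by
        linear_combination - hAB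
      rcases mul_eq_zero.1 hfact with h | h
      · linarith
      · linarith
    -- F = exp(c t) * V t is monotone on [0, s₁]
    set F : ℝ → ℝ := fun t => Real.exp (c * t) * V t with hFdef
    have hF : ∀ s ∈ Icc 0 s₁, HasDerivWithinAt F
        (Real.exp (c * s) * c * V s + Real.exp (c * s) * V' s) (Icc 0 s₁) s := by
      intro s hs
      have hexp : HasDerivAt (fun t : ℝ => Real.exp (c * t)) (Real.exp (c * s) * c) s := by
        have := ((hasDerivAt_id s).const_mul c).exp
        simpa [mul_comm] using this
      have hVw : HasDerivWithinAt V (V' s) (Icc 0 s₁) s := (hV s (hsub1 hs)).mono hsub1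
      exact (hexp.hasDerivWithinAt.mul hVw).congr_deriv (by ring)
    have hmono : MonotoneOn F (Icc 0 s₁) := by
      apply mono_of_deriv_nonneg' hF
      intro s hs
      have h1 := hkey2 s hs
      have h2 : (0:ℝ) < Real.exp (c * s) := Real.exp_pos _
      nlinarith [h1, h2]
    have hle : F 0 ≤ F s₁ := hmono ⟨le_refl 0, hs₁pos.le⟩ ⟨hs₁pos.le, le_refl s₁⟩ hs₁pos.le
    rw [hFdef] at hle
    simp only [mul_zero, Real.exp_zero, one_mul, hVs₁] at hle
    linarith
  -- assemble
  refine ⟨s₁, ⟨hs₁pos, hkey ▸ hs₂lt⟩, hVs₁, hpos, ?_, ?_⟩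
  · intro s hs
    exact hneg s ⟨hkey ▸ hs.1, hs.2⟩
  · rintro s ⟨hs0, hsL⟩ hVs
    have hsZ : s ∈ Z := ⟨⟨hs0.le, hsL.le⟩, hVs⟩
    have h1 : s₁ ≤ s := csInf_le hZbddb hsZ
    have h2 : s ≤ s₂ := le_csSup hZbdda hsZ
    rw [← hkey] at h2
    linarith
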